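/- For every natural number n, the following identity holds (Strehl's identity for the Franel numbers): ∑_{k=0}^{n} C(n,k)^3 = ∑_{k=0}^{n} C(n,k)^2 · C(2k,n). -/

import Mathlib

open Finset

lemma trinomial_symm {n k a : ℕ} (hk : k ≤ n) :
    n.choose k * k.choose a = n.choose a * (n - a).choose (n - k) := by
  rcases le_or_gt a k with h | h
  · rw [Nat.choose_mul h]
    congr 1
    rw [← Nat.choose_symm (Nat.sub_le_sub_right hk a)]
    congr 1
    omega
  · rw [Nat.choose_eq_zero_of_lt h, mul_zero]
    rcases le_or_gt a n with h2 | h2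
    · rw [Nat.choose_eq_zero_of_lt (show n - a < n - k by omega), mul_zero]
    · rw [Nat.choose_eq_zero_of_lt h2, zero_mul]

lemma vandermonde_sq (a b n : ℕ) (hab : a + b = n) :
    ∑ j ∈ range (n + 1), a.choose j * b.choose j = n.choose a := by
  have ha : a ≤ n := by omega
  have h1 : ∑ j ∈ range (n + 1), a.choose j * b.choose j
      = ∑ j ∈ range (a + 1), a.choose j * b.choose j := by
    rw [eq_comm]
    apply Finset.sum_subset (by simp [Nat.add_le_add_right ha 1, Finset.range_subset]; omega)
    intro x _ hx
    simp only [mem_range, not_lt] at hx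
    rw [Nat.choose_eq_zero_of_lt (by omega), zero_mul]
  rw [h1]
  have h2 : ∀ j ∈ range (a + 1), a.choose j * b.choose j
      = a.choose (a - j) * b.choose j := by
    intro j hj
    simp only [mem_range] at hj
    rw [Nat.choose_symm (by omega)]
  rw [Finset.sum_congr rfl h2, ← Finset.sum_range_reflect]
  have h3 : ∀ j ∈ range (a + 1), a.choose (a - (a + 1 - 1 - j)) * b.choose (a + 1 - 1 - j)
      = a.choose j * b.choose (a - j) := by
    intro j hj
    simp only [mem_range] at hj
    congr 2 <;> omega
  rw [Finset.sum_congr rfl h3, ← hab, Nat.add_choose_eq,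
    Finset.Nat.sum_antidiagonal_eq_sum_range_succ_mk]

lemma strehl_inner_sum (a b n : ℕ) (hab : a + b = n) :
    ∑ k ∈ range (n + 1), n.choose k ^ 2 * (k.choose a * k.choose b)
      = n.choose a ^ 3 := by
  have key : ∀ k ∈ range (n + 1), n.choose k ^ 2 * (k.choose a * k.choose b)
      = n.choose a ^ 2 * (b.choose (n - k) * a.choose (n - k)) := by
    intro k hk
    simp only [mem_range] at hk
    have hk' : k ≤ n := by omega
    have e1 := trinomial_symm (n := n) (k := k) (a := a) hk'
    have e2 := trinomial_symm (n := n) (k := k) (a := b) hk'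
    have hna : n - a = b := by omega
    have hnb : n - b = a := by omega
    rw [hna] at e1; rw [hnb] at e2
    have hsym : n.choose b = n.choose a := by
      have hb : b = n - a := by omega
      rw [hb, Nat.choose_symm (by omega)]
    calc n.choose k ^ 2 * (k.choose a * k.choose b)
        = (n.choose k * k.choose a) * (n.choose k * k.choose b) := by ring
      _ = (n.choose a * b.choose (n - k)) * (n.choose b * a.choose (n - k)) := by
          rw [e1, e2]
      _ = n.choose a ^ 2 * (b.choose (n - k) * a.choose (n - k)) := by
          rw [hsym]; ring
  rw [Finset.sum_congr rfl key, ← Finset.mul_sum]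
  have h4 : ∑ k ∈ range (n + 1), b.choose (n - k) * a.choose (n - k)
      = ∑ k ∈ range (n + 1), b.choose k * a.choose k := by
    rw [← Finset.sum_range_reflect]
    apply Finset.sum_congr rfl
    intro j hj
    simp only [mem_range] at hj
    congr 2 <;> omega
  rw [h4, vandermonde_sq b a n (by omega)]
  have hs : n.choose b = n.choose a := by
    have hb : b = n - a := by omega
    rw [hb, Nat.choose_symm (by omega)]
  rw [hs]
  ring

theorem strehl_franel_identity (n : ℕ) :
    ∑ k ∈ range (n + 1), (n.choose k) ^ 3
      = ∑ k ∈ range (n + 1), (n.choose k) ^ 2 * (2 * k).choose n := by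
  have expand : ∀ k, (2 * k).choose n
      = ∑ a ∈ range (n + 1), k.choose a * k.choose (n - a) := by
    intro k
    rw [two_mul, Nat.add_choose_eq, Finset.Nat.sum_antidiagonal_eq_sum_range_succ_mk]
  calc ∑ k ∈ range (n + 1), (n.choose k) ^ 3
      = ∑ a ∈ range (n + 1), n.choose a ^ 3 := rfl
    _ = ∑ a ∈ range (n + 1), ∑ k ∈ range (n + 1),
          n.choose k ^ 2 * (k.choose a * k.choose (n - a)) := by
        apply Finset.sum_congr rfl
        intro a ha
        simp only [mem_range] at ha
        rw [strehl_inner_sum a (n - a) n (by omega)]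
    _ = ∑ k ∈ range (n + 1), ∑ a ∈ range (n + 1),
          n.choose k ^ 2 * (k.choose a * k.choose (n - a)) := Finset.sum_comm
    _ = ∑ k ∈ range (n + 1), (n.choose k) ^ 2 * (2 * k).choose n := by
        apply Finset.sum_congr rfl
        intro k _
        rw [expand k, Finset.mul_sum]
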